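/- Let V = ℂ^{2n} be the symplectic vector space for Sp_{2n} with standard basis v₁,...,v_{2n}, and let s = e_{11} − e_{2n,2n} ∈ sp_{2n}. The Sp_{2n}×G_m-orbit of (s, v₁⊗v₁⊗v₁ + v_{2n}⊗v_{2n}⊗v_{2n}) in sp_{2n} ⊕ S³V (G_m acting with weight 2 on sp_{2n} and weight 3 on S³V) has dimension 4n; in particular its stabilizer's identity component is isomorphic to Sp_{2n−2}. -/

import Mathlib

set_option synthInstance.maxHeartbeats 1000000
set_option maxHeartbeats 2000000

open Matrix
open scoped TensorProduct

namespace Stmt14Aux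

abbrev Idx (m : ℕ) := Fin m ⊕ Fin m

def pi' {m : ℕ} : Idx m → Idx m
  | .inl a => .inr a.rev
  | .inr b => .inl b.rev

def eps {m : ℕ} : Idx m → ℂ
  | .inl _ => 1
  | .inr _ => -1

@[simp] lemma pi'_pi' {m : ℕ} (i : Idx m) : pi' (pi' i) = i := by
  cases i <;> simp [pi']

@[simp] lemma eps_pi' {m : ℕ} (i : Idx m) : eps (pi' i) = -eps i := by
  cases i <;> simp [pi', eps]

@[simp] lemma eps_mul_self {m : ℕ} (i : Idx m) : eps i * eps i = 1 := by
  cases i <;> simp [eps]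

def Jm (m : ℕ) : Matrix (Fin m) (Fin m) ℂ :=
  Matrix.of fun i j => if (i : ℕ) + (j : ℕ) + 1 = m then 1 else 0

def Jm' (m : ℕ) : Matrix (Idx m) (Idx m) ℂ := Matrix.fromBlocks 0 (Jm m) (-(Jm m)) 0

lemma Jm_apply {m : ℕ} (i j : Fin m) : Jm m i j = if j = i.rev then 1 else 0 := by
  have hi := i.isLt; have hj := j.isLt
  simp only [Jm, Matrix.of_apply, Fin.ext_iff, Fin.val_rev]
  split_ifs with h1 h2 h2 <;> first | rfl | omega

lemma Jm_apply' {m : ℕ} (i j : Fin m) : Jm m i j = if i = j.rev then 1 else 0 := by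
  have hi := i.isLt; have hj := j.isLt
  simp only [Jm, Matrix.of_apply, Fin.ext_iff, Fin.val_rev]
  split_ifs with h1 h2 h2 <;> first | rfl | omega

lemma Jm'_mul {m : ℕ} (M : Matrix (Idx m) (Idx m) ℂ) (i j : Idx m) :
    (Jm' m * M) i j = eps i * M (pi' i) j := by
  cases i with
  | inl a =>
      simp [Jm', Matrix.mul_apply, Fintype.sum_sum_type, Jm_apply, pi', eps, ite_mul]
  | inr b =>
      simp [Jm', Matrix.mul_apply, Fintype.sum_sum_type, Jm_apply, pi', eps, ite_mul]

lemma mul_Jm' {m : ℕ} (M : Matrix (Idx m) (Idx m) ℂ) (i j : Idx m) :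
    (M * Jm' m) i j = -eps j * M i (pi' j) := by
  cases j with
  | inl a =>
      simp [Jm', Matrix.mul_apply, Fintype.sum_sum_type, Jm_apply', pi', eps, mul_ite]
  | inr b =>
      simp [Jm', Matrix.mul_apply, Fintype.sum_sum_type, Jm_apply', pi', eps, mul_ite]

lemma sp_cond_iff {m : ℕ} (A : Matrix (Idx m) (Idx m) ℂ) :
    Jm' m * Aᵀ * Jm' m = A ↔ ∀ i j, A i j = -eps j * (eps i * A (pi' j) (pi' i)) := by
  rw [← Matrix.ext_iff]
  refine forall_congr' fun i => forall_congr' fun j => ?_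
  rw [mul_Jm', Jm'_mul, Matrix.transpose_apply, eq_comm]


noncomputable def spSub (m : ℕ) : Submodule ℂ (Matrix (Idx m) (Idx m) ℂ) where
  carrier := {A | ∀ i j, A i j = -eps j * (eps i * A (pi' j) (pi' i))}
  add_mem' := by
    intro A B hA hB i j
    simp only [Matrix.add_apply]
    rw [hA i j, hB i j]; ring
  zero_mem' := by intro i j; simp
  smul_mem' := by
    intro c A hA i j
    simp only [Matrix.smul_apply, smul_eq_mul]
    rw [hA i j]; ring

lemma mem_spSub {m : ℕ} {A : Matrix (Idx m) (Idx m) ℂ} :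
    A ∈ spSub m ↔ ∀ i j, A i j = -eps j * (eps i * A (pi' j) (pi' i)) := Iff.rfl

noncomputable def spEquiv (m : ℕ) : spSub m ≃ₗ[ℂ] (Sym2 (Idx m) → ℂ) where
  toFun A z := Sym2.lift ⟨fun i j => eps i * (A : Matrix (Idx m) (Idx m) ℂ) (pi' i) j, by
    intro i j
    show eps i * (A : Matrix (Idx m) (Idx m) ℂ) (pi' i) j = eps j * (A : Matrix (Idx m) (Idx m) ℂ) (pi' j) i
    rw [A.2 (pi' i) j, eps_pi', pi'_pi']
    have h1 := eps_mul_self i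
    linear_combination (eps j * ((A : Matrix (Idx m) (Idx m) ℂ) (pi' j) i)) * h1⟩ z
  map_add' A B := by
    funext z
    induction z using Sym2.ind with
    | _ i j => simp [Sym2.lift_mk, Matrix.add_apply, mul_add]
  map_smul' c A := by
    funext z
    induction z using Sym2.ind with
    | _ i j => simp [Sym2.lift_mk, Matrix.smul_apply, smul_eq_mul]; ring
  invFun f := ⟨Matrix.of fun i j => -eps i * f (s(pi' i, j)), by
    intro i j
    simp only [Matrix.of_apply, eps_pi', pi'_pi']
    rw [show (s(j, pi' i) : Sym2 (Idx m)) = s(pi' i, j) from Sym2.eq_swap]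
    have h1 := eps_mul_self j
    linear_combination (eps i * f (s(pi' i, j))) * h1⟩
  left_inv A := by
    apply Subtype.ext
    ext i j
    simp only [Matrix.of_apply, Sym2.lift_mk, eps_pi', pi'_pi']
    have h1 := eps_mul_self i
    linear_combination ((A : Matrix (Idx m) (Idx m) ℂ) i j) * h1
  right_inv f := by
    funext z
    induction z using Sym2.ind with
    | _ i j =>
      simp only [Sym2.lift_mk, Matrix.of_apply, eps_pi', pi'_pi']
      have h1 := eps_mul_self i
      linear_combination (f (s(i, j))) * h1

lemma finrank_spSub (m : ℕ) : Module.finrank ℂ (spSub m) = m * (2 * m + 1) := by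
  rw [(spEquiv m).finrank_eq, Module.finrank_pi, Sym2.card]
  simp only [Fintype.card_sum, Fintype.card_fin, Nat.choose_two_right, Nat.add_sub_cancel]
  have : (m + m + 1) * (m + m) = 2 * (m * (2*m+1)) := by ring
  omega


variable {n : ℕ}

lemma predLt (hn : 0 < n) : n - 1 < n := by omega

def emb (hn : 0 < n) : Idx (n - 1) → Idx n
  | .inl a => .inl ⟨a.val + 1, by have := a.isLt; omega⟩
  | .inr b => .inr ⟨b.val, by have := b.isLt; omega⟩

def ret (n : ℕ) : Idx n → Option (Idx (n - 1))
  | .inl a => if h : (a : ℕ) = 0 then none else some (.inl ⟨a.val - 1, by have := a.isLt; omega⟩)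
  | .inr b => if h : (b : ℕ) = n - 1 then none else some (.inr ⟨b.val, by have := b.isLt; omega⟩)

@[simp] lemma ret_emb (hn : 0 < n) (k : Idx (n - 1)) : ret n (emb hn k) = some k := by
  cases k with
  | inl a => simp [emb, ret]
  | inr b =>
      have := b.isLt
      simp [emb, ret]
      omega

lemma emb_of_ret (hn : 0 < n) {i : Idx n} {k : Idx (n - 1)} (h : ret n i = some k) :
    emb hn k = i := by
  cases i with
  | inl a =>
      simp only [ret] at h
      by_cases h0 : (a : ℕ) = 0
      · rw [dif_pos h0] at h; exact absurd h (by simp)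
      · rw [dif_neg h0] at h
        rw [Option.some_inj] at h
        subst h
        simp [emb, Fin.ext_iff]
        omega
  | inr b =>
      simp only [ret] at h
      by_cases h0 : (b : ℕ) = n - 1
      · rw [dif_pos h0] at h; exact absurd h (by simp)
      · rw [dif_neg h0] at h
        rw [Option.some_inj] at h
        subst h
        simp [emb, Fin.ext_iff]

lemma ret_none (hn : 0 < n) {i : Idx n} (h : ret n i = none) :
    i = Sum.inl ⟨0, hn⟩ ∨ i = Sum.inr ⟨n - 1, predLt hn⟩ := by
  cases i with
  | inl a =>
      simp only [ret] at h
      by_cases h0 : (a : ℕ) = 0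
      · left; simp [Fin.ext_iff, h0]
      · rw [dif_neg h0] at h; exact absurd h (by simp)
  | inr b =>
      simp only [ret] at h
      by_cases h0 : (b : ℕ) = n - 1
      · right; simp [Fin.ext_iff, h0]
      · rw [dif_neg h0] at h; exact absurd h (by simp)

@[simp] lemma ret_i1 (hn : 0 < n) : ret n (Sum.inl ⟨0, hn⟩) = none := by simp [ret]

@[simp] lemma ret_i2 (hn : 0 < n) : ret n (Sum.inr ⟨n - 1, predLt hn⟩) = none := by simp [ret]

lemma pi'_emb (hn : 0 < n) (k : Idx (n - 1)) : pi' (emb hn k) = emb hn (pi' k) := by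
  cases k with
  | inl a =>
      have := a.isLt
      simp [pi', emb, Fin.ext_iff, Fin.val_rev]
      omega
  | inr b =>
      have := b.isLt
      simp [pi', emb, Fin.ext_iff, Fin.val_rev]
      omega

@[simp] lemma eps_emb (hn : 0 < n) (k : Idx (n - 1)) : eps (emb hn k) = eps k := by
  cases k <;> rfl

lemma pi'_i1 (hn : 0 < n) : pi' (Sum.inl ⟨0, hn⟩ : Idx n) = Sum.inr ⟨n - 1, predLt hn⟩ := by
  simp [pi', Fin.ext_iff, Fin.val_rev]

lemma pi'_i2 (hn : 0 < n) : pi' (Sum.inr ⟨n - 1, predLt hn⟩ : Idx n) = Sum.inl ⟨0, hn⟩ := by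
  simp [pi', Fin.ext_iff, Fin.val_rev]
  omega

def extFun (A : Matrix (Idx (n - 1)) (Idx (n - 1)) ℂ) : Matrix (Idx n) (Idx n) ℂ :=
  Matrix.of fun i j =>
    match ret n i, ret n j with
    | some k, some l => A k l
    | _, _ => 0

lemma extFun_apply_emb (hn : 0 < n) (A : Matrix (Idx (n - 1)) (Idx (n - 1)) ℂ)
    (k l : Idx (n - 1)) : extFun (n := n) A (emb hn k) (emb hn l) = A k l := by
  simp [extFun, ret_emb hn]

lemma extFun_apply_none_left {A : Matrix (Idx (n - 1)) (Idx (n - 1)) ℂ} {i j : Idx n}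
    (h : ret n i = none) : extFun (n := n) A i j = 0 := by
  simp [extFun, h]

lemma extFun_apply_none_right {A : Matrix (Idx (n - 1)) (Idx (n - 1)) ℂ} {i j : Idx n}
    (h : ret n j = none) : extFun (n := n) A i j = 0 := by
  rcases h' : ret n i with _ | k <;> simp [extFun, h, h']

lemma extFun_add (A B : Matrix (Idx (n - 1)) (Idx (n - 1)) ℂ) :
    extFun (n := n) (A + B) = extFun (n := n) A + extFun (n := n) B := by
  ext i j
  rcases h : ret n i with _ | k <;> rcases h' : ret n j with _ | l <;>
    simp [extFun, h, h', Matrix.add_apply]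

lemma extFun_smul (c : ℂ) (A : Matrix (Idx (n - 1)) (Idx (n - 1)) ℂ) :
    extFun (n := n) (c • A) = c • extFun (n := n) A := by
  ext i j
  rcases h : ret n i with _ | k <;> rcases h' : ret n j with _ | l <;>
    simp [extFun, h, h', Matrix.smul_apply]


noncomputable def evalT {ι : Type} [Fintype ι] [DecidableEq ι] (a b c : ι) :
    ((ι → ℂ) ⊗[ℂ] ((ι → ℂ) ⊗[ℂ] (ι → ℂ))) →ₗ[ℂ] ℂ :=
  (TensorProduct.lid ℂ ℂ).toLinearMap ∘ₗ
    TensorProduct.map (LinearMap.proj a)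
      ((TensorProduct.lid ℂ ℂ).toLinearMap ∘ₗ
        TensorProduct.map (LinearMap.proj b) (LinearMap.proj c))

@[simp] lemma evalT_tmul {ι : Type} [Fintype ι] [DecidableEq ι] (a b c : ι)
    (x y z : ι → ℂ) : evalT a b c (x ⊗ₜ[ℂ] (y ⊗ₜ[ℂ] z)) = x a * (y b * z c) := by
  simp [evalT, TensorProduct.map_tmul, smul_eq_mul]

lemma mul_s_apply {ι : Type} [Fintype ι] [DecidableEq ι] (M : Matrix ι ι ℂ) (a b : ι)
    (i k : ι) :
    (M * (Matrix.single a a (1:ℂ) - Matrix.single b b (1:ℂ))) i k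
      = (if k = a then M i a else 0) - (if k = b then M i b else 0) := by
  rw [Matrix.mul_sub, Matrix.sub_apply]
  congr 1
  · rw [Matrix.mul_apply]
    by_cases h : k = a
    · subst h
      simp [Matrix.single, ite_and, mul_ite, Finset.sum_ite_eq]
    · simp [Matrix.single, ite_and, mul_ite, Ne.symm h, h]
  · rw [Matrix.mul_apply]
    by_cases h : k = b
    · subst h
      simp [Matrix.single, ite_and, mul_ite, Finset.sum_ite_eq]
    · simp [Matrix.single, ite_and, mul_ite, Ne.symm h, h]

lemma s_mul_apply {ι : Type} [Fintype ι] [DecidableEq ι] (M : Matrix ι ι ℂ) (a b : ι)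
    (i k : ι) :
    ((Matrix.single a a (1:ℂ) - Matrix.single b b (1:ℂ)) * M) i k
      = (if i = a then M a k else 0) - (if i = b then M b k else 0) := by
  rw [Matrix.sub_mul, Matrix.sub_apply]
  congr 1
  · rw [Matrix.mul_apply]
    by_cases h : i = a
    · subst h
      simp [Matrix.single, ite_and, ite_mul, Finset.sum_ite_eq]
    · simp [Matrix.single, ite_and, ite_mul, Ne.symm h, h]
  · rw [Matrix.mul_apply]
    by_cases h : i = b
    · subst h
      simp [Matrix.single, ite_and, ite_mul, Finset.sum_ite_eq]
    · simp [Matrix.single, ite_and, ite_mul, Ne.symm h, h]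


end Stmt14Aux

/-- Infinitesimal version of: the `Sp_{2n} × G_m`-orbit of
`(s, v₁⊗v₁⊗v₁ + v_{2n}⊗v_{2n}⊗v_{2n})` in `sp_{2n} ⊕ S³V` (weights 2 and 3) has dimension
`4n`, and the identity component of its stabilizer is isomorphic to `Sp_{2n−2}`: the image of
the Lie algebra action map `Φ` at this point has rank `4n`, and its kernel (the Lie algebra
of the stabilizer) is isomorphic to `sp_{2n−2}`.  Here `T` is any model (via `τ`) of the
triple tensor power `V ⊗ V ⊗ V` containing `S³V`. -/
theorem stmt_14 (n : ℕ) (hn : 0 < n)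
    (T : Type) [AddCommGroup T] [Module ℂ T]
    (τ : (((Fin n ⊕ Fin n) → ℂ) ⊗[ℂ] (((Fin n ⊕ Fin n) → ℂ) ⊗[ℂ] ((Fin n ⊕ Fin n) → ℂ)))
        ≃ₗ[ℂ] T) :
    let J : Matrix (Fin n) (Fin n) ℂ :=
      Matrix.of fun i j => if (i : ℕ) + (j : ℕ) + 1 = n then 1 else 0
    let J' : Matrix (Fin n ⊕ Fin n) (Fin n ⊕ Fin n) ℂ := Matrix.fromBlocks 0 J (-J) 0
    let J₂ : Matrix (Fin (n - 1)) (Fin (n - 1)) ℂ :=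
      Matrix.of fun i j => if (i : ℕ) + (j : ℕ) + 1 = n - 1 then 1 else 0
    let J₂' : Matrix (Fin (n - 1) ⊕ Fin (n - 1)) (Fin (n - 1) ⊕ Fin (n - 1)) ℂ :=
      Matrix.fromBlocks 0 J₂ (-J₂) 0
    let i₁ : Fin n ⊕ Fin n := Sum.inl ⟨0, hn⟩
    let i₂ : Fin n ⊕ Fin n := Sum.inr ⟨n - 1, by omega⟩
    let v₁ : (Fin n ⊕ Fin n) → ℂ := Pi.single i₁ 1
    let v₂ : (Fin n ⊕ Fin n) → ℂ := Pi.single i₂ 1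
    let s : Matrix (Fin n ⊕ Fin n) (Fin n ⊕ Fin n) ℂ :=
      Matrix.single i₁ i₁ 1 - Matrix.single i₂ i₂ 1
    let p : ((Fin n ⊕ Fin n) → ℂ) ⊗[ℂ] (((Fin n ⊕ Fin n) → ℂ) ⊗[ℂ] ((Fin n ⊕ Fin n) → ℂ)) :=
      v₁ ⊗ₜ[ℂ] (v₁ ⊗ₜ[ℂ] v₁) + v₂ ⊗ₜ[ℂ] (v₂ ⊗ₜ[ℂ] v₂)
    let Dmap : Matrix (Fin n ⊕ Fin n) (Fin n ⊕ Fin n) ℂ →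
        (((Fin n ⊕ Fin n) → ℂ) ⊗[ℂ] (((Fin n ⊕ Fin n) → ℂ) ⊗[ℂ] ((Fin n ⊕ Fin n) → ℂ)) →ₗ[ℂ]
          ((Fin n ⊕ Fin n) → ℂ) ⊗[ℂ] (((Fin n ⊕ Fin n) → ℂ) ⊗[ℂ] ((Fin n ⊕ Fin n) → ℂ))) :=
      fun A =>
        TensorProduct.map A.mulVecLin LinearMap.id
          + TensorProduct.map LinearMap.id (TensorProduct.map A.mulVecLin LinearMap.id)
          + TensorProduct.map LinearMap.id (TensorProduct.map LinearMap.id A.mulVecLin)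
    ∀ W : Submodule ℂ (Matrix (Fin n ⊕ Fin n) (Fin n ⊕ Fin n) ℂ),
      (∀ A, A ∈ W ↔ J' * Aᵀ * J' = A) →
    ∀ W' : Submodule ℂ (Matrix (Fin (n - 1) ⊕ Fin (n - 1)) (Fin (n - 1) ⊕ Fin (n - 1)) ℂ),
      (∀ A, A ∈ W' ↔ J₂' * Aᵀ * J₂' = A) →
    ∀ Φ : (W × ℂ) →ₗ[ℂ] (Matrix (Fin n ⊕ Fin n) (Fin n ⊕ Fin n) ℂ × T),
      (∀ (A : W) (c : ℂ), Φ (A, c) =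
        ((A : Matrix (Fin n ⊕ Fin n) (Fin n ⊕ Fin n) ℂ) * s
            - s * (A : Matrix (Fin n ⊕ Fin n) (Fin n ⊕ Fin n) ℂ) + (2 * c) • s,
          τ (Dmap (A : Matrix (Fin n ⊕ Fin n) (Fin n ⊕ Fin n) ℂ) p + (3 * c) • p))) →
    Module.finrank ℂ (LinearMap.range Φ) = 4 * n ∧
      Nonempty ((LinearMap.ker Φ) ≃ₗ[ℂ] W') := by
  intro J J' J₂ J₂' i₁ i₂ v₁ v₂ s p Dmap W hW W' hW' Φ hΦ
  classical
  open Stmt14Aux in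
  have hWeq : W = Stmt14Aux.spSub n := by
    apply Submodule.ext
    intro A
    rw [hW A]
    exact Stmt14Aux.sp_cond_iff (m := n) A
  have hW'eq : W' = Stmt14Aux.spSub (n - 1) := by
    apply Submodule.ext
    intro A
    rw [hW' A]
    exact Stmt14Aux.sp_cond_iff (m := n - 1) A
  have hi12 : i₁ ≠ i₂ := by simp [i₁, i₂]
  have hs_eq : s = Matrix.single i₁ i₁ (1:ℂ) - Matrix.single i₂ i₂ (1:ℂ) := rfl
  have hp_eq : p = v₁ ⊗ₜ[ℂ] (v₁ ⊗ₜ[ℂ] v₁) + v₂ ⊗ₜ[ℂ] (v₂ ⊗ₜ[ℂ] v₂) := rfl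
  have hv1_eq : v₁ = Pi.single i₁ 1 := rfl
  have hv2_eq : v₂ = Pi.single i₂ 1 := rfl
  have hi1_eq : i₁ = Sum.inl ⟨0, hn⟩ := rfl
  have hi2_eq : i₂ = Sum.inr ⟨n - 1, by omega⟩ := rfl
  have hret1 : Stmt14Aux.ret n i₁ = none := Stmt14Aux.ret_i1 hn
  have hret2 : Stmt14Aux.ret n i₂ = none := Stmt14Aux.ret_i2 hn
  have hpi1 : Stmt14Aux.pi' i₁ = i₂ := Stmt14Aux.pi'_i1 hn
  have hpi2 : Stmt14Aux.pi' i₂ = i₁ := Stmt14Aux.pi'_i2 hn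
  -- membership of extended matrices
  have memW : ∀ B : Matrix (Stmt14Aux.Idx (n-1)) (Stmt14Aux.Idx (n-1)) ℂ,
      B ∈ Stmt14Aux.spSub (n-1) → Stmt14Aux.extFun (n := n) B ∈ W := by
    intro B hB
    rw [hWeq, Stmt14Aux.mem_spSub]
    intro i j
    rcases h : Stmt14Aux.ret n i with _ | k
    · rw [Stmt14Aux.extFun_apply_none_left h]
      have h2 : Stmt14Aux.ret n (Stmt14Aux.pi' i) = none := by
        rcases Stmt14Aux.ret_none hn h with rfl | rfl
        · rw [Stmt14Aux.pi'_i1 hn]; exact Stmt14Aux.ret_i2 hn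
        · rw [Stmt14Aux.pi'_i2 hn]; exact Stmt14Aux.ret_i1 hn
      rw [Stmt14Aux.extFun_apply_none_right h2]
      ring
    · rcases h' : Stmt14Aux.ret n j with _ | l
      · rw [Stmt14Aux.extFun_apply_none_right h']
        have h2 : Stmt14Aux.ret n (Stmt14Aux.pi' j) = none := by
          rcases Stmt14Aux.ret_none hn h' with rfl | rfl
          · rw [Stmt14Aux.pi'_i1 hn]; exact Stmt14Aux.ret_i2 hn
          · rw [Stmt14Aux.pi'_i2 hn]; exact Stmt14Aux.ret_i1 hn
        rw [Stmt14Aux.extFun_apply_none_left h2]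
        ring
      · obtain rfl := Stmt14Aux.emb_of_ret hn h
        obtain rfl := Stmt14Aux.emb_of_ret hn h'
        rw [Stmt14Aux.extFun_apply_emb hn, Stmt14Aux.pi'_emb hn, Stmt14Aux.pi'_emb hn,
          Stmt14Aux.extFun_apply_emb hn, Stmt14Aux.eps_emb hn, Stmt14Aux.eps_emb hn]
        exact (Stmt14Aux.mem_spSub.mp hB) k l
  let Ψ : Stmt14Aux.spSub (n-1) →ₗ[ℂ] (W × ℂ) :=
    { toFun := fun B => (⟨Stmt14Aux.extFun (n := n) (B : Matrix _ _ ℂ), memW _ B.2⟩, 0)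
      map_add' := by
        intro B C
        refine Prod.ext (Subtype.ext ?_) (by simp)
        simp [Stmt14Aux.extFun_add]
      map_smul' := by
        intro c B
        refine Prod.ext (Subtype.ext ?_) (by simp)
        simp [Stmt14Aux.extFun_smul] }
  have hΨapp : ∀ B : Stmt14Aux.spSub (n-1),
      Ψ B = (⟨Stmt14Aux.extFun (n := n) (B : Matrix _ _ ℂ), memW _ B.2⟩, 0) := fun _ => rfl
  have hΨinj : Function.Injective Ψ := by
    apply LinearMap.ker_eq_bot.mp
    apply (Submodule.eq_bot_iff _).mpr
    intro B hB
    have hB0 := LinearMap.mem_ker.mp hB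
    rw [hΨapp] at hB0
    have h1 : Stmt14Aux.extFun (n := n) (B : Matrix _ _ ℂ) = 0 := by
      have := congrArg (fun x : W × ℂ => (x.1 : Matrix (Stmt14Aux.Idx n) (Stmt14Aux.Idx n) ℂ)) hB0
      simpa using this
    apply Subtype.ext
    ext k l
    have h2 : Stmt14Aux.extFun (n := n) (B : Matrix _ _ ℂ) (Stmt14Aux.emb hn k)
        (Stmt14Aux.emb hn l) = 0 := by rw [h1]; rfl
    rw [Stmt14Aux.extFun_apply_emb hn] at h2
    simpa using h2
  have hrange : LinearMap.range Ψ = LinearMap.ker Φ := by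
    apply le_antisymm
    · rintro x ⟨B, rfl⟩
      rw [hΨapp, LinearMap.mem_ker, hΦ]
      have hc1 : ∀ i, Stmt14Aux.extFun (n := n) (B : Matrix _ _ ℂ) i i₁ = 0 := fun i =>
        Stmt14Aux.extFun_apply_none_right hret1
      have hc2 : ∀ i, Stmt14Aux.extFun (n := n) (B : Matrix _ _ ℂ) i i₂ = 0 := fun i =>
        Stmt14Aux.extFun_apply_none_right hret2
      rw [Prod.mk_eq_zero]
      constructor
      · have hMs : Stmt14Aux.extFun (n := n) (B : Matrix _ _ ℂ) * s = 0 := by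
          ext i k
          rw [hs_eq, Stmt14Aux.mul_s_apply]
          simp [hc1, hc2]
        have hsM : s * Stmt14Aux.extFun (n := n) (B : Matrix _ _ ℂ) = 0 := by
          ext i k
          rw [hs_eq, Stmt14Aux.s_mul_apply]
          have hr1 : ∀ j, Stmt14Aux.extFun (n := n) (B : Matrix _ _ ℂ) i₁ j = 0 := fun j =>
            Stmt14Aux.extFun_apply_none_left hret1
          have hr2 : ∀ j, Stmt14Aux.extFun (n := n) (B : Matrix _ _ ℂ) i₂ j = 0 := fun j =>
            Stmt14Aux.extFun_apply_none_left hret2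
          simp [hr1, hr2]
        rw [hMs, hsM]
        simp
      · rw [LinearEquiv.map_eq_zero_iff]
        have hv1 : Matrix.mulVecLin (Stmt14Aux.extFun (n := n) (B : Matrix _ _ ℂ)) v₁ = 0 := by
          rw [hv1_eq]
          funext i
          simp [Matrix.mulVecLin_apply, Matrix.mulVec_single, hc1]
        have hv2 : Matrix.mulVecLin (Stmt14Aux.extFun (n := n) (B : Matrix _ _ ℂ)) v₂ = 0 := by
          rw [hv2_eq]
          funext i
          simp [Matrix.mulVecLin_apply, Matrix.mulVec_single, hc2]
        show Dmap _ p + ((3:ℂ) * 0) • p = 0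
        rw [hp_eq]
        simp only [Dmap, LinearMap.add_apply, map_add, TensorProduct.map_tmul,
          LinearMap.id_coe, id_eq, hv1, hv2, TensorProduct.zero_tmul, TensorProduct.tmul_zero]
        simp
    · rintro ⟨⟨A, hAW⟩, c⟩ hx
      rw [LinearMap.mem_ker, hΦ, Prod.mk_eq_zero] at hx
      obtain ⟨hx1, hx2⟩ := hx
      rw [LinearEquiv.map_eq_zero_iff] at hx2
      have key : ∀ a b d : Stmt14Aux.Idx n,
          Stmt14Aux.evalT a b d (Dmap A p + ((3:ℂ) * c) • p) = 0 := by
        intro a b d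
        rw [hx2]
        simp
      have key' : ∀ a b d : Stmt14Aux.Idx n,
          A a i₁ * (v₁ b * v₁ d) + v₁ a * (A b i₁ * v₁ d) + v₁ a * (v₁ b * A d i₁)
          + (A a i₂ * (v₂ b * v₂ d) + v₂ a * (A b i₂ * v₂ d) + v₂ a * (v₂ b * A d i₂))
          + (3*c) * (v₁ a * (v₁ b * v₁ d) + v₂ a * (v₂ b * v₂ d)) = 0 := by
        intro a b d
        have h := key a b d
        rw [hp_eq] at h
        simp only [Dmap, LinearMap.add_apply, map_add, _root_.map_smul, TensorProduct.map_tmul,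
          LinearMap.id_coe, id_eq, Matrix.mulVecLin_apply, hv1_eq, hv2_eq,
          Matrix.mulVec_single, mul_one, Stmt14Aux.evalT_tmul, smul_eq_mul,
          MulOpposite.op_one, one_smul, Matrix.col_apply] at h
        exact h
      have hAc1 : A i₁ i₁ = -c := by
        have h := key' i₁ i₁ i₁
        rw [hv1_eq, hv2_eq] at h
        simp [Pi.single_apply, hi12] at h
        linear_combination h / 3
      have hAc2 : A i₂ i₂ = -c := by
        have h := key' i₂ i₂ i₂
        rw [hv1_eq, hv2_eq] at h
        simp [Pi.single_apply, hi12, Ne.symm hi12] at h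
        linear_combination h / 3
      have hc0 : c = 0 := by
        have h : (A * s - s * A + ((2:ℂ) * c) • s) i₁ i₁ = 0 := by rw [hx1]; rfl
        rw [hs_eq, Matrix.add_apply, Matrix.sub_apply, Matrix.smul_apply,
          Stmt14Aux.mul_s_apply, Stmt14Aux.s_mul_apply] at h
        simp [hi12, Ne.symm hi12, Matrix.sub_apply, Matrix.single, smul_eq_mul] at h
        exact h
      have hAv1 : ∀ a, A a i₁ = 0 := by
        intro a
        by_cases ha : a = i₁
        · rw [ha, hAc1, hc0, neg_zero]
        · have h := key' a i₁ i₁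
          rw [hv1_eq, hv2_eq] at h
          simp [Pi.single_apply, hi12, ha] at h
          exact h
      have hAv2 : ∀ a, A a i₂ = 0 := by
        intro a
        by_cases ha : a = i₂
        · rw [ha, hAc2, hc0, neg_zero]
        · have h := key' a i₂ i₂
          rw [hv1_eq, hv2_eq] at h
          simp [Pi.single_apply, hi12, Ne.symm hi12, ha] at h
          exact h
      have hsp : ∀ i j, A i j = -Stmt14Aux.eps j *
          (Stmt14Aux.eps i * A (Stmt14Aux.pi' j) (Stmt14Aux.pi' i)) := by
        have h := hAW
        rw [hWeq] at h
        exact Stmt14Aux.mem_spSub.mp h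
      have hrow1 : ∀ j, A i₁ j = 0 := by
        intro j
        rw [hsp i₁ j, hpi1, hAv2 (Stmt14Aux.pi' j)]
        ring
      have hrow2 : ∀ j, A i₂ j = 0 := by
        intro j
        rw [hsp i₂ j, hpi2, hAv1 (Stmt14Aux.pi' j)]
        ring
      refine ⟨⟨Matrix.of fun k l => A (Stmt14Aux.emb hn k) (Stmt14Aux.emb hn l), ?_⟩, ?_⟩
      · rw [Stmt14Aux.mem_spSub]
        intro k l
        simp only [Matrix.of_apply]
        rw [hsp (Stmt14Aux.emb hn k) (Stmt14Aux.emb hn l), Stmt14Aux.pi'_emb hn,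
          Stmt14Aux.pi'_emb hn, Stmt14Aux.eps_emb hn, Stmt14Aux.eps_emb hn]
      · rw [hΨapp]
        refine Prod.ext (Subtype.ext ?_) ?_
        · show Stmt14Aux.extFun _ = A
          ext i j
          rcases h : Stmt14Aux.ret n i with _ | k
          · rw [Stmt14Aux.extFun_apply_none_left h]
            rcases Stmt14Aux.ret_none hn h with rfl | rfl
            · exact (hrow1 j).symm
            · exact (hrow2 j).symm
          · rcases h' : Stmt14Aux.ret n j with _ | l
            · rw [Stmt14Aux.extFun_apply_none_right h']
              rcases Stmt14Aux.ret_none hn h' with rfl | rfl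
              · exact (hAv1 i).symm
              · exact (hAv2 i).symm
            · obtain rfl := Stmt14Aux.emb_of_ret hn h
              obtain rfl := Stmt14Aux.emb_of_ret hn h'
              rw [Stmt14Aux.extFun_apply_emb hn]
              rfl
        · exact hc0.symm
  have hWfr : Module.finrank ℂ W = n * (2 * n + 1) := by
    rw [hWeq]; exact Stmt14Aux.finrank_spSub n
  have hkerfr : Module.finrank ℂ (LinearMap.ker Φ) = (n-1) * (2 * (n-1) + 1) := by
    rw [← hrange, ← Stmt14Aux.finrank_spSub (n-1)]
    exact (LinearEquiv.ofInjective Ψ hΨinj).symm.finrank_eq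
  constructor
  · have h1 := LinearMap.finrank_range_add_finrank_ker Φ
    rw [hkerfr] at h1
    have h2 : Module.finrank ℂ (↥W × ℂ) = n * (2 * n + 1) + 1 := by
      rw [Module.finrank_prod, hWfr, Module.finrank_self]
    rw [h2] at h1
    have harith : (n-1) * (2 * (n-1) + 1) + 4 * n = n * (2 * n + 1) + 1 := by
      obtain ⟨m, rfl⟩ : ∃ m, n = m + 1 := ⟨n - 1, by omega⟩
      simp only [Nat.add_sub_cancel]
      ring
    linarith
  · exact ⟨((LinearEquiv.ofInjective Ψ hΨinj).trans
      (LinearEquiv.ofEq _ _ hrange)).symm.trans (LinearEquiv.ofEq _ _ hW'eq.symm)⟩
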